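/- Let Φ denote the standard normal cdf and consider, for k, σ > 0, the equation ρ/(2k) − 1/2 + Φ(−ρ/σ) = 0 in ρ. Then: (i) if k/σ > √(π/2), there exists a unique solution ρ* = ρ*(k,σ) in the interval (0, k); (ii) on the region {(k,σ) : k/σ > √(π/2)}, ρ*(k,σ) is strictly decreasing in σ for fixed k, and ρ*(k,σ) → k as σ → 0⁺; (iii) ρ*(k,σ) is strictly increasing in k for fixed σ. -/

import Mathlib

open Set

noncomputable section

/-- The standard normal cumulative distribution function `Φ`. -/
def Phi (x : ℝ) : ℝ :=
  ∫ t in Set.Iic x, Real.exp (-(t ^ 2) / 2) / Real.sqrt (2 * Real.pi)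

open MeasureTheory intervalIntegral

namespace RhoAux

def f (t : ℝ) : ℝ := Real.exp (-(t ^ 2) / 2) / Real.sqrt (2 * Real.pi)

lemma sqrt2pi_pos : 0 < Real.sqrt (2 * Real.pi) := Real.sqrt_pos.2 (by positivity)

lemma f_eq (t : ℝ) : f t = Real.exp (-(1/2) * t ^ 2) * (Real.sqrt (2 * Real.pi))⁻¹ := by
  rw [f, div_eq_mul_inv]; ring_nf

lemma f_pos (t : ℝ) : 0 < f t := div_pos (Real.exp_pos _) sqrt2pi_pos

lemma f_cont : Continuous f := by
  unfold f; fun_prop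

lemma f_int : Integrable f := by
  have h : Integrable (fun t : ℝ => Real.exp (-(1/2) * t ^ 2)) :=
    integrable_exp_neg_mul_sq (by norm_num)
  have h2 := h.mul_const (Real.sqrt (2 * Real.pi))⁻¹
  have : f = fun t => Real.exp (-(1/2) * t ^ 2) * (Real.sqrt (2 * Real.pi))⁻¹ := funext f_eq
  rw [this]; exact h2

lemma f_total : (∫ t, f t) = 1 := by
  simp_rw [f_eq]
  rw [MeasureTheory.integral_mul_const, integral_gaussian]
  rw [show Real.pi / (1/2) = 2 * Real.pi by ring]
  exact mul_inv_cancel₀ (ne_of_gt sqrt2pi_pos)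

lemma f_even (t : ℝ) : f (-t) = f t := by simp [f]

lemma f_anti {a b : ℝ} (ha : 0 ≤ a) (hab : a < b) : f b < f a := by
  unfold f
  have h2 : a ^ 2 < b ^ 2 := by nlinarith
  have : Real.exp (-(b ^ 2) / 2) < Real.exp (-(a ^ 2) / 2) := by
    apply Real.exp_lt_exp.2; linarith
  exact div_lt_div_of_pos_right this sqrt2pi_pos


def G (x : ℝ) : ℝ := ∫ t in (0:ℝ)..x, f t

lemma G_cont : Continuous G := f_int.continuous_primitive 0

lemma G_odd (x : ℝ) : G (-x) = - G x := by
  have : G (-x) = ∫ t in (0:ℝ)..(-x), f (-t) := by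
    rw [G]; congr 1; ext t; rw [f_even]
  rw [this, intervalIntegral.integral_comp_neg, neg_zero, neg_neg]
  rw [G, ← intervalIntegral.integral_symm]

lemma G_strictMono : StrictMono G := by
  intro a b hab
  have h : G b - G a = ∫ t in a..b, f t := by
    rw [G, G, ← intervalIntegral.integral_add_adjacent_intervals
      f_int.intervalIntegrable f_int.intervalIntegrable]
    ring
  have hpos : 0 < ∫ t in a..b, f t :=
    intervalIntegral_pos_of_pos f_int.intervalIntegrable f_pos hab
  linarith

lemma G_pos {x : ℝ} (hx : 0 < x) : 0 < G x := by
  have := G_strictMono hx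
  simpa [G] using this

lemma Phi_eq (x : ℝ) : Phi x = 1/2 + G x := by
  have h1 : Phi x - Phi 0 = G x := by
    rw [Phi, Phi, G]
    exact intervalIntegral.integral_Iic_sub_Iic f_int.integrableOn f_int.integrableOn
  have h2 : Phi 0 = 1/2 := by
    have hodd : (∫ t in Set.Ioi (0:ℝ), f t) = ∫ t in Set.Iic (0:ℝ), f t := by
      have h := integral_comp_neg_Ioi (0:ℝ) f
      simp only [neg_zero, f_even] at h
      exact h
    have htot : (∫ t in Set.Iic (0:ℝ), f t) + ∫ t in Set.Ioi (0:ℝ), f t = ∫ t, f t :=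
      intervalIntegral.integral_Iic_add_Ioi f_int.integrableOn f_int.integrableOn
    rw [f_total, hodd] at htot
    have : Phi 0 = ∫ t in Set.Iic (0:ℝ), f t := rfl
    rw [this]; linarith
  linarith

lemma Phi_lt_one (x : ℝ) : Phi x < 1 := by
  have htot : (∫ t in Set.Iic x, f t) + ∫ t in Set.Ioi x, f t = ∫ t, f t :=
    intervalIntegral.integral_Iic_add_Ioi f_int.integrableOn f_int.integrableOn
  rw [f_total] at htot
  have hpos : 0 < ∫ t in Set.Ioi x, f t := by
    rw [MeasureTheory.setIntegral_pos_iff_support_of_nonneg_ae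
      (Filter.Eventually.of_forall fun t => (f_pos t).le) f_int.integrableOn]
    have : Function.support f = Set.univ := by
      ext t; simp [Function.mem_support, (f_pos t).ne']
    rw [this, Set.univ_inter]
    simpa using measure_Ioi_pos (volume : Measure ℝ) x
  have : Phi x = ∫ t in Set.Iic x, f t := rfl
  linarith

lemma G_lt_half (x : ℝ) : G x < 1/2 := by
  have := Phi_lt_one x
  rw [Phi_eq] at this; linarith

lemma key1 {x : ℝ} (hx : 0 < x) : x * f x < G x := by
  have h : (∫ t in (0:ℝ)..x, f x) < ∫ t in (0:ℝ)..x, f t := by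
    apply intervalIntegral.integral_lt_integral_of_continuousOn_of_le_of_exists_lt hx
      continuousOn_const f_cont.continuousOn
    · intro t ht
      rcases eq_or_lt_of_le ht.2 with h | h
      · rw [h]
      · exact (f_anti ht.1.le h).le
    · exact ⟨0, ⟨le_refl 0, hx.le⟩, f_anti le_rfl hx⟩
  simpa [mul_comm, G] using h

lemma key2 {x y : ℝ} (hx : 0 ≤ x) (hxy : x < y) : G y - G x ≤ f x * (y - x) := by
  have h : (∫ t in x..y, f t) ≤ ∫ t in x..y, f x := by
    apply intervalIntegral.integral_mono_on hxy.le f_int.intervalIntegrable intervalIntegrable_const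
    intro t ht
    rcases eq_or_lt_of_le ht.1 with h | h
    · rw [← h]
    · exact (f_anti hx h).le
  have hx2 : G y - G x = ∫ t in x..y, f t := by
    rw [G, G, ← intervalIntegral.integral_add_adjacent_intervals
      f_int.intervalIntegrable f_int.intervalIntegrable (b := x) (c := y)]
    ring
  rw [hx2]
  calc (∫ t in x..y, f t) ≤ ∫ t in x..y, f x := h
    _ = f x * (y - x) := by rw [intervalIntegral.integral_const, smul_eq_mul]; ring


lemma q_anti {a b : ℝ} (ha : 0 < a) (hab : a < b) : G b / b < G a / a := by
  have h1 := key1 ha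
  have h2 := key2 ha.le hab
  have hb : 0 < b := ha.trans hab
  rw [div_lt_div_iff₀ hb ha]
  nlinarith

lemma lt_of_q_lt {a b : ℝ} (ha : 0 < a) (hb : 0 < b) (h : G a / a < G b / b) : b < a := by
  rcases lt_trichotomy a b with h1 | h1 | h1
  · exact absurd (q_anti ha h1) (by linarith)
  · exfalso; rw [h1] at h; linarith
  · exact h1

lemma q_inj {a b : ℝ} (ha : 0 < a) (hb : 0 < b) (h : G a / a = G b / b) : a = b := by
  rcases lt_trichotomy a b with h1 | h1 | h1
  · exact absurd (q_anti ha h1) (by rw [h]; exact lt_irrefl _)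
  · exact h1
  · exact absurd (q_anti hb h1) (by rw [h]; exact lt_irrefl _)

lemma eq_zero_iff {k σ ρ : ℝ} : ρ/(2*k) - 1/2 + Phi (-ρ/σ) = 0 ↔ G (ρ/σ) = ρ/(2*k) := by
  rw [show -ρ/σ = -(ρ/σ) by ring, Phi_eq, G_odd]
  constructor <;> intro h <;> linarith

lemma aux_div {k σ ρ : ℝ} (hk : 0 < k) (hσ : 0 < σ) (hρ : 0 < ρ) :
    (ρ/(2*k)) / (ρ/σ) = σ/(2*k) := by
  field_simp

lemma q_val {k σ ρ : ℝ} (hk : 0 < k) (hσ : 0 < σ) (hρ : 0 < ρ)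
    (h : G (ρ/σ) = ρ/(2*k)) : G (ρ/σ) / (ρ/σ) = σ/(2*k) := by
  rw [h, aux_div hk hσ hρ]

lemma sqrt_halfpi_pos : 0 < Real.sqrt (Real.pi/2) :=
  Real.sqrt_pos.2 (by positivity)

lemma sqrt2pi_eq : Real.sqrt (2*Real.pi) = 2 * Real.sqrt (Real.pi/2) := by
  rw [show (2:ℝ)*Real.pi = 2^2 * (Real.pi/2) by ring,
    Real.sqrt_mul (by positivity), Real.sqrt_sq (by norm_num)]

/-- The slope condition gives `σ/(2k) < f 0`. -/
lemma slope_lt {k σ : ℝ} (hk : 0 < k) (hσ : 0 < σ)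
    (h : Real.sqrt (Real.pi/2) < k/σ) : σ/(2*k) < f 0 := by
  have hf0 : f 0 = 1 / Real.sqrt (2*Real.pi) := by simp [f, div_eq_mul_inv]
  rw [hf0, div_lt_div_iff₀ (by linarith) sqrt2pi_pos, sqrt2pi_eq]
  have := (lt_div_iff₀ hσ).1 h
  nlinarith [sqrt_halfpi_pos]


lemma exists_root {k σ : ℝ} (hk : 0 < k) (hσ : 0 < σ)
    (hs : Real.sqrt (Real.pi/2) < k/σ) :
    ∃ ρ ∈ Set.Ioo 0 k, G (ρ/σ) = ρ/(2*k) := by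
  have hslt := slope_lt hk hσ hs
  have hkσ : 0 < k/σ := div_pos hk hσ
  have hev : ∀ᶠ x in nhds (0:ℝ), σ/(2*k) < f x ∧ x < k/σ :=
    ((f_cont.continuousAt (x := 0)).eventually (eventually_gt_nhds hslt)).and
      (eventually_lt_nhds hkσ)
  obtain ⟨x, ⟨hfx, hxk⟩, hx0⟩ :=
    ((hev.filter_mono (nhdsWithin_le_nhds (s := Set.Ioi (0:ℝ)))).and
      self_mem_nhdsWithin).exists
  have hx0 : (0:ℝ) < x := hx0
  set s₀ := σ * x with hs₀
  have hs₀pos : 0 < s₀ := mul_pos hσ hx0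
  have hs₀k : s₀ < k := by
    have := (lt_div_iff₀ hσ).1 hxk
    nlinarith
  set F : ℝ → ℝ := fun s => s/(2*k) - G (s/σ) with hF
  have hFc : ContinuousOn F (Set.Icc s₀ k) := by
    apply Continuous.continuousOn
    exact (continuous_id.div_const _).sub (G_cont.comp (continuous_id.div_const _))
  have hFs₀ : F s₀ < 0 := by
    have hdiv : s₀/σ = x := by rw [hs₀]; field_simp
    have h1 := key1 hx0
    have h2 : s₀/(2*k) = x * (σ/(2*k)) := by rw [hs₀]; ring
    simp only [hF, hdiv]
    nlinarith [mul_lt_mul_of_pos_left hfx hx0]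
  have hFk : 0 < F k := by
    have := G_lt_half (k/σ)
    have hk2 : k/(2*k) = 1/2 := by field_simp
    simp only [hF]
    rw [hk2]; linarith
  have h0mem : (0:ℝ) ∈ Set.Ioo (F s₀) (F k) := ⟨hFs₀, hFk⟩
  obtain ⟨ρ, hρmem, hρeq⟩ := intermediate_value_Ioo hs₀k.le hFc h0mem
  refine ⟨ρ, ⟨hs₀pos.trans hρmem.1, hρmem.2⟩, ?_⟩
  have : ρ/(2*k) - G (ρ/σ) = 0 := hρeq
  linarith

end RhoAux

/-- **Lemma (properties of `ρ*`).** For `k, σ > 0` consider the equation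
`ρ/(2k) − 1/2 + Φ(−ρ/σ) = 0`. (i) If `k/σ > √(π/2)` there is a unique solution
`ρ* ∈ (0,k)`; (ii) on that region the solution is strictly decreasing in `σ` and tends
to `k` as `σ → 0⁺`; (iii) it is strictly increasing in `k`. -/
theorem rho_star_properties :
    (∀ k σ : ℝ, 0 < k → 0 < σ → Real.sqrt (Real.pi / 2) < k / σ →
      ∃! ρ : ℝ, ρ ∈ Set.Ioo 0 k ∧ ρ / (2 * k) - 1 / 2 + Phi (-ρ / σ) = 0) ∧
    (∀ k σ σ' ρ ρ' : ℝ, 0 < k → 0 < σ → 0 < σ' →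
      Real.sqrt (Real.pi / 2) < k / σ → Real.sqrt (Real.pi / 2) < k / σ' →
      ρ ∈ Set.Ioo 0 k → ρ / (2 * k) - 1 / 2 + Phi (-ρ / σ) = 0 →
      ρ' ∈ Set.Ioo 0 k → ρ' / (2 * k) - 1 / 2 + Phi (-ρ' / σ') = 0 →
      σ < σ' → ρ' < ρ) ∧
    (∀ k : ℝ, 0 < k → ∀ r : ℝ → ℝ,
      (∀ σ : ℝ, 0 < σ → Real.sqrt (Real.pi / 2) < k / σ →
        r σ ∈ Set.Ioo 0 k ∧ r σ / (2 * k) - 1 / 2 + Phi (-(r σ) / σ) = 0) →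
      Filter.Tendsto r (nhdsWithin 0 (Set.Ioi 0)) (nhds k)) ∧
    (∀ k k' σ ρ ρ' : ℝ, 0 < σ → 0 < k → 0 < k' →
      Real.sqrt (Real.pi / 2) < k / σ → Real.sqrt (Real.pi / 2) < k' / σ →
      ρ ∈ Set.Ioo 0 k → ρ / (2 * k) - 1 / 2 + Phi (-ρ / σ) = 0 →
      ρ' ∈ Set.Ioo 0 k' → ρ' / (2 * k') - 1 / 2 + Phi (-ρ' / σ) = 0 →
      k < k' → ρ < ρ') := by
  refine ⟨?_, ?_, ?_, ?_⟩
  · -- (i) existence and uniqueness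
    intro k σ hk hσ hs
    obtain ⟨ρ, hmem, heq⟩ := RhoAux.exists_root hk hσ hs
    refine ⟨ρ, ⟨hmem, RhoAux.eq_zero_iff.2 heq⟩, ?_⟩
    rintro ρ' ⟨hmem', heq'⟩
    have h' := RhoAux.eq_zero_iff.1 heq'
    have hq := RhoAux.q_val hk hσ hmem.1 heq
    have hq' := RhoAux.q_val hk hσ hmem'.1 h'
    have hdd := RhoAux.q_inj (div_pos hmem'.1 hσ) (div_pos hmem.1 hσ) (hq'.trans hq.symm)
    field_simp at hdd
    exact hdd
  · -- (ii) strict decrease in σ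
    intro k σ σ' ρ ρ' hk hσ hσ' _ _ hmem heq hmem' heq' hσσ'
    have h1 := RhoAux.eq_zero_iff.1 heq
    have h1' := RhoAux.eq_zero_iff.1 heq'
    have hρ := hmem.1
    have hρ' := hmem'.1
    have hlt : ρ'/σ' < ρ'/σ := div_lt_div_of_pos_left hρ' hσ hσσ'
    have hG : RhoAux.G (ρ'/σ') < RhoAux.G (ρ'/σ) := RhoAux.G_strictMono hlt
    have hqρ := RhoAux.q_val hk hσ hρ h1
    have hnum : ρ'/(2*k) < RhoAux.G (ρ'/σ) := by rw [← h1']; exact hG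
    have hstep : (ρ'/(2*k)) / (ρ'/σ) < RhoAux.G (ρ'/σ) / (ρ'/σ) :=
      div_lt_div_of_pos_right hnum (div_pos hρ' hσ)
    have hkey : RhoAux.G (ρ/σ) / (ρ/σ) < RhoAux.G (ρ'/σ) / (ρ'/σ) := by
      rw [hqρ, ← RhoAux.aux_div hk hσ hρ']
      exact hstep
    have hfin := RhoAux.lt_of_q_lt (div_pos hρ hσ) (div_pos hρ' hσ) hkey
    exact (div_lt_div_iff_of_pos_right hσ).1 hfin
  · -- (iii) limit as σ → 0⁺
    intro k hk r hr
    have h2k : (0:ℝ) < 2*k := by linarith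
    have hmono : Monotone (fun n : ℕ => Set.Iic ((n:ℝ))) :=
      fun m n h => Set.Iic_subset_Iic.2 (Nat.cast_le.2 h)
    have hU : ⋃ n : ℕ, Set.Iic ((n:ℝ)) = Set.univ := by
      ext t
      simp only [Set.mem_iUnion, Set.mem_Iic, Set.mem_univ, iff_true]
      exact exists_nat_ge t
    have htend : Filter.Tendsto (fun n : ℕ => ∫ t in Set.Iic ((n:ℝ)), RhoAux.f t)
        Filter.atTop (nhds 1) := by
      have h := MeasureTheory.tendsto_setIntegral_of_monotone
        (fun n : ℕ => measurableSet_Iic) hmono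
        (by rw [hU]; exact RhoAux.f_int.integrableOn)
      rw [hU] at h
      simpa [MeasureTheory.setIntegral_univ, RhoAux.f_total] using h
    rw [Metric.tendsto_nhdsWithin_nhds]
    intro ε hε
    have hεk : 0 < ε/(2*k) := by positivity
    have hhalf : (1:ℝ)/2 - ε/(2*k) < 1/2 := by linarith
    have hGt : Filter.Tendsto (fun n : ℕ => RhoAux.G ((n:ℝ))) Filter.atTop (nhds (1/2)) := by
      have h := htend.sub_const (1/2)
      have he : (fun n : ℕ => (∫ t in Set.Iic ((n:ℝ)), RhoAux.f t) - 1/2)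
          = fun n : ℕ => RhoAux.G ((n:ℝ)) := by
        funext n
        have hP : Phi ((n:ℝ)) = ∫ t in Set.Iic ((n:ℝ)), RhoAux.f t := rfl
        have := RhoAux.Phi_eq ((n:ℝ))
        rw [hP] at this
        linarith
      rw [he] at h
      norm_num at h
      exact h
    have hev : ∀ᶠ n : ℕ in Filter.atTop, 1/2 - ε/(2*k) < RhoAux.G ((n:ℝ)) :=
      hGt.eventually (eventually_gt_nhds hhalf)
    obtain ⟨n, hnG, hn1⟩ := (hev.and (Filter.eventually_ge_atTop 1)).exists
    set X : ℝ := (n:ℝ) with hX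
    have hXpos : (0:ℝ) < X := by
      rw [hX]
      exact_mod_cast Nat.lt_of_lt_of_le Nat.zero_lt_one hn1
    have hqX : 0 < RhoAux.G X / X := div_pos (RhoAux.G_pos hXpos) hXpos
    refine ⟨min (k / Real.sqrt (Real.pi/2)) (2*k*(RhoAux.G X / X)),
      lt_min (div_pos hk RhoAux.sqrt_halfpi_pos) (by positivity), ?_⟩
    intro σ hσmem hσd
    have hσ : 0 < σ := hσmem
    rw [Real.dist_eq, sub_zero, abs_of_pos hσ] at hσd
    have hσ1 : σ < k / Real.sqrt (Real.pi/2) := lt_of_lt_of_le hσd (min_le_left _ _)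
    have hσ2 : σ < 2*k*(RhoAux.G X / X) := lt_of_lt_of_le hσd (min_le_right _ _)
    have hcond : Real.sqrt (Real.pi/2) < k/σ := by
      rw [lt_div_iff₀ hσ]
      have := (lt_div_iff₀ RhoAux.sqrt_halfpi_pos).1 hσ1
      nlinarith
    obtain ⟨hmem, heq⟩ := hr σ hσ hcond
    have h1 := RhoAux.eq_zero_iff.1 heq
    have hρ := hmem.1
    have hq := RhoAux.q_val hk hσ hρ h1
    have hqlt : RhoAux.G (r σ/σ) / (r σ/σ) < RhoAux.G X / X := by
      rw [hq, div_lt_iff₀ h2k]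
      nlinarith
    have hXlt : X < r σ/σ := RhoAux.lt_of_q_lt (div_pos hρ hσ) hXpos hqlt
    have hGlt : RhoAux.G X < RhoAux.G (r σ/σ) := RhoAux.G_strictMono hXlt
    have hGXbig : 1/2 - ε/(2*k) < RhoAux.G (r σ/σ) := lt_trans hnG hGlt
    have hrbig : k - ε < r σ := by
      rw [h1] at hGXbig
      have h3 := (lt_div_iff₀ h2k).1 hGXbig
      have hc : ε/(2*k)*(2*k) = ε := div_mul_cancel₀ _ h2k.ne'
      nlinarith
    rw [Real.dist_eq, abs_lt]
    exact ⟨by linarith, by linarith [hmem.2]⟩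
  · -- (iv) strict increase in k
    intro k k' σ ρ ρ' hσ hk hk' _ _ hmem heq hmem' heq' hkk'
    have h1 := RhoAux.eq_zero_iff.1 heq
    have h1' := RhoAux.eq_zero_iff.1 heq'
    have hρ := hmem.1
    have hρ' := hmem'.1
    have hq := RhoAux.q_val hk hσ hρ h1
    have hq' := RhoAux.q_val hk' hσ hρ' h1'
    have hmid : σ/(2*k') < σ/(2*k) :=
      div_lt_div_of_pos_left hσ (by linarith) (by linarith)
    have hkey : RhoAux.G (ρ'/σ) / (ρ'/σ) < RhoAux.G (ρ/σ) / (ρ/σ) := by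
      rw [hq, hq']
      exact hmid
    have hfin := RhoAux.lt_of_q_lt (div_pos hρ' hσ) (div_pos hρ hσ) hkey
    exact (div_lt_div_iff_of_pos_right hσ).1 hfin
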